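/- Let G be a graph and let G* be an inclusion-minimal connected induced subgraph of G containing a given vertex set R. Let T* be a spanning tree of G*. Then every leaf of T* belongs to R. -/

import Mathlib

open scoped Classical

/-- An interior vertex of a path has two distinct neighbors. -/
lemma two_neighbors_of_mem_support {V : Type*} {G : SimpleGraph V} {a b v : V}
    {p : G.Walk a b} (hp : p.IsPath) (hv : v ∈ p.support) (ha : v ≠ a) (hb : v ≠ b) :
    ∃ x y, x ≠ y ∧ G.Adj v x ∧ G.Adj v y := by
  obtain ⟨x, hx, r1, hr1⟩ := SimpleGraph.Walk.exists_eq_cons_of_ne hb (p.dropUntil v hv)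
  obtain ⟨y, hy, r2, hr2⟩ := SimpleGraph.Walk.exists_eq_cons_of_ne ha ((p.takeUntil v hv).reverse)
  refine ⟨x, y, ?_, hx, hy⟩
  have hnodup := hp.support_nodup
  rw [← SimpleGraph.Walk.take_spec p hv, SimpleGraph.Walk.support_append,
    List.nodup_append] at hnodup
  have hdisj := hnodup.2.2
  have hymem : y ∈ (p.takeUntil v hv).support := by
    have : y ∈ (p.takeUntil v hv).reverse.support := by
      rw [hr2, SimpleGraph.Walk.support_cons]
      exact List.mem_cons_of_mem _ r2.start_mem_support
    rwa [SimpleGraph.Walk.support_reverse, List.mem_reverse] at this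
  have hxmem : x ∈ (p.dropUntil v hv).support.tail := by
    rw [hr1, SimpleGraph.Walk.support_cons]
    exact r1.start_mem_support
  intro hxy
  exact hdisj y hymem x hxmem hxy.symm

/-- Let `G*` (induced on the vertex set `S`) be an inclusion-minimal connected induced
subgraph of `G` containing a vertex set `R`, and `T` a spanning tree of `G*`.  Then every
leaf of `T` belongs to `R`. -/
theorem spanning_tree_leaves_in_R {V : Type*} [Fintype V]
    (G : SimpleGraph V) (R S : Set V) (hRS : R ⊆ S)
    (hconn : (G.induce S).Connected)
    (hmin : ∀ S' : Set V, S' ⊆ S → R ⊆ S' → (G.induce S').Connected → S' = S)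
    (T : SimpleGraph ↥S) [DecidableRel T.Adj]
    (hsub : T ≤ G.induce S) (htree : T.IsTree) :
    ∀ v : ↥S, T.degree v = 1 → (v : V) ∈ R := by
  intro v hdeg
  by_contra hvR
  set S' : Set V := S \ {(v : V)} with hS'def
  have hS'S : S' ⊆ S := Set.diff_subset
  have hRS' : R ⊆ S' := fun x hx => ⟨hRS hx, fun h => hvR (by
    simp only [Set.mem_singleton_iff] at h
    exact h ▸ hx)⟩
  -- `v` has a neighbor in `T`, so `S'` is nonempty
  obtain ⟨u, hu⟩ : ∃ u, T.Adj v u := by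
    have hpos : 0 < T.degree v := by omega
    rw [SimpleGraph.degree_pos_iff_exists_adj] at hpos
    exact hpos
  have huS' : (u : V) ∈ S' := by
    refine ⟨u.2, fun h => ?_⟩
    simp only [Set.mem_singleton_iff] at h
    exact hu.ne' (Subtype.ext h)
  -- walks in `T` avoiding `v` yield reachability in `G.induce S'`
  have key : ∀ {a b : ↥S} (p : T.Walk a b), v ∉ p.support →
      ∀ (ha : (a : V) ∈ S') (hb : (b : V) ∈ S'),
      (G.induce S').Reachable ⟨a, ha⟩ ⟨b, hb⟩ := by
    intro a b p
    induction p with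
    | nil => intro _ ha hb; exact SimpleGraph.Reachable.refl _
    | @cons a c b h q ih =>
      intro hvs ha hb
      rw [SimpleGraph.Walk.support_cons, List.mem_cons] at hvs
      push_neg at hvs
      have hvq : v ∉ q.support := hvs.2
      have hcS' : (c : V) ∈ S' := by
        refine ⟨c.2, fun hcv => ?_⟩
        simp only [Set.mem_singleton_iff] at hcv
        exact hvq (Subtype.ext hcv.symm ▸ q.start_mem_support)
      have hadj : (G.induce S').Adj ⟨a, ha⟩ ⟨c, hcS'⟩ := by
        have := hsub h
        simpa using this
      exact (hadj.reachable).trans (ih hvq hcS' hb)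
  -- `G.induce S'` is connected
  have hconn' : (G.induce S').Connected := by
    have : Nonempty ↥S' := ⟨⟨u, huS'⟩⟩
    refine ⟨fun a b => ?_⟩
    set a' : ↥S := ⟨a.1, hS'S a.2⟩
    set b' : ↥S := ⟨b.1, hS'S b.2⟩
    obtain ⟨w⟩ := htree.isConnected a' b'
    have hvsupp : v ∉ (w.toPath : T.Walk a' b').support := by
      intro hvw
      have hva : v ≠ a' := fun h => a.2.2 (congrArg Subtype.val h.symm)
      have hvb : v ≠ b' := fun h => b.2.2 (congrArg Subtype.val h.symm)
      obtain ⟨x, y, hxy, hvx, hvy⟩ :=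
        two_neighbors_of_mem_support w.toPath.2 hvw hva hvb
      have : 1 < T.degree v := by
        rw [← SimpleGraph.card_neighborFinset_eq_degree]
        apply Finset.one_lt_card.mpr
        exact ⟨x, by simpa using hvx, y, by simpa using hvy, hxy⟩
      omega
    exact key (w.toPath : T.Walk a' b') hvsupp a.2 b.2
  -- contradiction with minimality
  have hvS' : (v : V) ∈ S' := by
    rw [hmin S' hS'S hRS' hconn']; exact v.2
  exact hvS'.2 rfl
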